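/- The composite π_e ∘ τ_h is the identity on Cl(V_e)f̄, where π_e is contraction with the isotropic vector e and τ_h is multiplication with h, for a hyperbolic pair (e,h) with h ∈ F. -/

import Mathlib

open CliffordAlgebra

/-- The bilinear form `(v|w) = ½(q(v+w) − q(v) − q(w))` associated to `q`. -/
noncomputable def halfPolar {K V : Type*} [Field K] [CharZero K] [AddCommGroup V] [Module K V]
    (q : QuadraticForm K V) : V →ₗ[K] Module.Dual K V :=
  (2⁻¹ : K) • (QuadraticMap.polarBilin q)

lemma halfPolar_eq_zero {K V : Type*} [Field K] [CharZero K] [AddCommGroup V] [Module K V]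
    {q : QuadraticForm K V} {v w : V} (h : halfPolar q v w = 0) :
    QuadraticMap.polar q v w = 0 := by
  simp only [halfPolar, LinearMap.smul_apply, smul_eq_mul] at h
  field_simp at h
  exact h.trans (mul_zero _)

lemma iota_mul_list_prod {K V : Type*} [Field K] [CharZero K] [AddCommGroup V] [Module K V]
    (q : QuadraticForm K V) (e : V) (l : List V)
    (h : ∀ w ∈ l, QuadraticMap.polar q e w = 0) :
    ι q e * (l.map (ι q)).prod = ((-1 : K) ^ l.length) • ((l.map (ι q)).prod * ι q e) := by
  induction l with
  | nil => simp
  | cons w t ih =>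
    have hw : ι q e * ι q w = - (ι q w * ι q e) := by
      refine eq_neg_of_add_eq_zero_left ?_
      rw [ι_mul_ι_add_swap, h w List.mem_cons_self, map_zero]
    have ht := ih (fun x hx => h x (List.mem_cons_of_mem _ hx))
    simp only [List.map_cons, List.prod_cons, List.length_cons]
    rw [← mul_assoc, hw, neg_mul, mul_assoc, ht, pow_succ]
    simp [mul_smul, mul_assoc]

lemma half_cancel {K A : Type*} [Field K] [CharZero K] [Ring A] [Algebra K A]
    (a Ln u : A) :
    (2⁻¹ : K) • (a * ((2 : K) • Ln - u) + a * u) = a * Ln := by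
  rw [mul_sub, sub_add_cancel, mul_smul_comm, smul_smul,
    inv_mul_cancel₀ (two_ne_zero), one_smul]

/-- `π_e ∘ τ_h` is the identity on `Cl(V_e)f̄`, where `π_e` is contraction
with the isotropic vector `e` and `τ_h` is multiplication with `h = f_{n+1}`, for a
hyperbolic pair `(e,h)` with `h ∈ F`.  Identifying `V_e` with `⟨e,h⟩^⊥ ⊆ V` and
`Cl(V_e)f̄` with `{a·f₁⋯f_n : a ∈ Cl(⟨e,h⟩^⊥)}`, this says that for every
`a ∈ Cl(⟨e,h⟩^⊥)` the defining expression of `π_e` applied to `τ_h(a f̄) = a f` equals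
`a f̄` again: `½((−1)^n e(af) + (af)e) = a·f₁⋯f_n` for `a` even (and with sign
`(−1)^{n+1}` for `a` odd). -/
theorem stmt10 {K V : Type*} [Field K] [IsAlgClosed K] [CharZero K]
    [AddCommGroup V] [Module K V] [FiniteDimensional K V]
    (q : QuadraticForm K V) (n : ℕ)
    (hdim : Module.finrank K V = 2 * (n + 1))
    (hq : (QuadraticMap.polarBilin q).Nondegenerate)
    (f : Fin (n + 1) → V) (hf : LinearIndependent K f)
    (hff : ∀ i j, halfPolar q (f i) (f j) = 0)
    (e : V) (hqe : q e = 0)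
    (hef : ∀ i, halfPolar q e (f i) = if i = Fin.last n then 1 else 0) :
    ∀ a ∈ Algebra.adjoin K (ι q '' {w : V | halfPolar q e w = 0 ∧
        halfPolar q (f (Fin.last n)) w = 0}),
      (a ∈ evenOdd q 0 →
        (2⁻¹ : K) • (((-1 : K) ^ n) •
              (ι q e * (a * ((List.ofFn f).map (ι q)).prod))
            + (a * ((List.ofFn f).map (ι q)).prod) * ι q e)
          = a * ((List.ofFn (fun i : Fin n => f i.castSucc)).map (ι q)).prod) ∧
      (a ∈ evenOdd q 1 →
        (2⁻¹ : K) • (((-1 : K) ^ (n + 1)) •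
              (ι q e * (a * ((List.ofFn f).map (ι q)).prod))
            + (a * ((List.ofFn f).map (ι q)).prod) * ι q e)
          = a * ((List.ofFn (fun i : Fin n => f i.castSucc)).map (ι q)).prod) := by
  intro a ha
  set Ln : CliffordAlgebra q := ((List.ofFn (fun i : Fin n => f i.castSucc)).map (ι q)).prod
    with hLn
  set L : CliffordAlgebra q := ((List.ofFn f).map (ι q)).prod with hL
  -- key conjugation identity
  have key : ι q e * a = involute a * ι q e := by
    induction ha using Algebra.adjoin_induction with
    | mem x hx =>
      obtain ⟨w, hw, rfl⟩ := hx
      rw [involute_ι, neg_mul]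
      refine eq_neg_of_add_eq_zero_left ?_
      rw [ι_mul_ι_add_swap, halfPolar_eq_zero hw.1, map_zero]
    | algebraMap r =>
      rw [AlgHom.commutes, Algebra.commutes]
    | add x _ _ _ hx hy => rw [map_add, mul_add, add_mul, hx, hy]
    | mul x y _ _ hx hy =>
      rw [map_mul, ← mul_assoc, hx, mul_assoc, hy, mul_assoc]
  -- L = Ln * ι q (f (last n))
  have hsplit : L = Ln * ι q (f (Fin.last n)) := by
    rw [hL, hLn, List.ofFn_succ', List.concat_eq_append, List.map_append,
      List.prod_append, List.map_singleton, List.prod_singleton]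
  -- e anticommutes with the first n f's
  have hELn : ι q e * Ln = ((-1 : K) ^ n) • (Ln * ι q e) := by
    have := iota_mul_list_prod q e (List.ofFn (fun i : Fin n => f i.castSucc)) ?_
    · rwa [List.length_ofFn] at this
    · intro w hw
      rw [List.mem_ofFn] at hw
      obtain ⟨i, rfl⟩ := hw
      apply halfPolar_eq_zero
      rw [hef]
      simp [(Fin.castSucc_lt_last i).ne]
  -- e and f_last form a hyperbolic pair
  have hlast : ι q e * ι q (f (Fin.last n))
      = algebraMap K _ 2 - ι q (f (Fin.last n)) * ι q e := by
    have hp : QuadraticMap.polar q e (f (Fin.last n)) = 2 := by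
      have := hef (Fin.last n)
      simp only [if_pos rfl, halfPolar, LinearMap.smul_apply, smul_eq_mul] at this
      field_simp at this
      exact this.trans (by simp)
    have := ι_mul_ι_add_swap (Q := q) e (f (Fin.last n))
    rw [hp] at this
    linear_combination (norm := noncomm_ring) this
  have heL : ι q e * L = ((-1 : K) ^ n) • ((2 : K) • Ln - L * ι q e) := by
    rw [hsplit, ← mul_assoc, hELn, smul_mul_assoc, mul_assoc, hlast, mul_sub,
      ← Algebra.commutes, ← Algebra.smul_def, mul_assoc]
  constructor
  · intro he
    have hkey : ι q e * a = a * ι q e := by rw [key, involute_eq_of_mem_even he]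
    have h1 : ((-1 : K) ^ n) • (ι q e * (a * L)) = a * ((2 : K) • Ln - L * ι q e) := by
      rw [← mul_assoc, hkey, mul_assoc, heL, mul_smul_comm, smul_smul, ← pow_add,
        Even.neg_one_pow ⟨n, rfl⟩, one_smul]
    rw [h1, mul_assoc a L, half_cancel]
  · intro ho
    have hkey : ι q e * a = -(a * ι q e) := by
      rw [key, involute_eq_of_mem_odd ho, neg_mul]
    have h1 : ((-1 : K) ^ (n + 1)) • (ι q e * (a * L)) = a * ((2 : K) • Ln - L * ι q e) := by
      rw [← mul_assoc, hkey, neg_mul, mul_assoc, heL, mul_smul_comm, smul_neg, smul_smul,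
        ← pow_add]
      rw [show n + 1 + n = 2 * n + 1 by ring, pow_succ, pow_mul, neg_one_sq, one_pow,
        one_mul, neg_smul, one_smul, neg_neg]
    rw [h1, mul_assoc a L, half_cancel]
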